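/- Let u ∈ Mat_N(ℂ) be a unitary matrix. The following are equivalent: (1) for every diagonal matrix d, the diagonal part of u d u* equals (tr d)·I_N, where tr is the normalized trace; (2) |u_{ij}|² = 1/N for all i, j. That is, the square of diagonal algebras ℂ^N and uℂ^Nu* inside Mat_N(ℂ) is a commuting square if and only if u is a complex Hadamard matrix (up to normalization). -/

import Mathlib

open Matrix

lemma diag_entry (N : ℕ) (u : Matrix (Fin N) (Fin N) ℂ) (d : Fin N → ℂ) (i : Fin N) :
    (u * Matrix.diagonal d * uᴴ) i i = ∑ k, d k * Complex.normSq (u i k) := by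
  simp [Matrix.mul_apply, Matrix.diagonal, Finset.sum_mul, conjTranspose_apply,
    Complex.mul_conj]
  congr 1
  ext k
  rw [mul_comm (u i k) (d k), mul_assoc, Complex.mul_conj]

/-- For a unitary `u ∈ Mat_N(ℂ)`, the square of diagonal algebras `ℂ^N` and `u ℂ^N u*`
is a commuting square (the diagonal part of `u d u*` equals `tr(d)·I` for every diagonal `d`)
iff all entries of `u` have modulus squared `1/N`, i.e. `u` is a complex Hadamard matrix
up to normalization. -/
theorem stmt2 (N : ℕ) (hN : 0 < N) (u : Matrix (Fin N) (Fin N) ℂ)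
    (hu : u ∈ Matrix.unitaryGroup (Fin N) ℂ) :
    (∀ d : Fin N → ℂ, ∀ i, (u * Matrix.diagonal d * uᴴ) i i = (N : ℂ)⁻¹ * ∑ k, d k) ↔
      ∀ i j, ‖u i j‖ ^ 2 = (N : ℝ)⁻¹ := by
  constructor
  · intro h i j
    have := h (fun k => if k = j then 1 else 0) i
    rw [diag_entry] at this
    simp at this
    rw [Complex.sq_norm]
    have e : ((Complex.normSq (u i j) : ℝ) : ℂ) = (((N : ℝ)⁻¹ : ℝ) : ℂ) := by
      push_cast
      convert this using 2 <;> simp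
    exact_mod_cast e
  · intro h d i
    rw [diag_entry]
    have : ∀ k, (Complex.normSq (u i k) : ℂ) = (N : ℂ)⁻¹ := by
      intro k
      have := h i k
      rw [Complex.sq_norm] at this
      rw [this]
      push_cast
      ring
    simp only [this]
    rw [Finset.mul_sum]
    congr 1
    ext k
    ring
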